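/- Let P(z) = ∑_{j=0}^m a_j z^{m-j} be a polynomial with complex coefficients, η a nonzero complex number, and n ≤ m a positive integer. Fix an n-th root η^{1/n} of η. Then z^n - η divides P(z) if and only if for every r ∈ {0, 1, ..., n-1}, ∑_{j ≡ r (mod n)} a_j η^{-j/n} = 0, where η^{-j/n} denotes (η^{1/n})^{-j}. -/

import Mathlib

open Polynomial Finset

private lemma mod_sub_iff' {m n j r : ℕ} (hj : j ≤ m) (hr : r ≤ m) :
    (m - j) % n = (m - r) % n ↔ j % n = r % n := by
  constructor <;> intro h
  · have h' : Nat.ModEq n (m - j) (m - r) := h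
    have h2 := h'.add_right (j + r)
    rw [show (m - j) + (j + r) = m + r by omega,
        show (m - r) + (j + r) = m + j by omega] at h2
    exact (Nat.ModEq.add_left_cancel' m h2).symm
  · have h' : Nat.ModEq n j r := h
    have h3 : Nat.ModEq n ((m - j) + (j + r)) ((m - r) + (j + r)) := by
      rw [show (m - j) + (j + r) = m + r by omega,
          show (m - r) + (j + r) = m + j by omega]
      exact (Nat.ModEq.refl m).add h'.symm
    exact Nat.ModEq.add_right_cancel' _ h3

private lemma key_iff' {m n j s : ℕ} (hj : j ≤ m) (hs : s < n) (hsm : s ≤ m) :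
    (m - j) % n = s ↔ j % n = (m - s) % n := by
  have h1 : m - (m - s) = s := Nat.sub_sub_self hsm
  constructor
  · intro h
    exact (mod_sub_iff' hj (Nat.sub_le m s)).mp
      (by rw [h1, Nat.mod_eq_of_lt hs]; exact h)
  · intro h
    have := (mod_sub_iff' hj (Nat.sub_le m s)).mpr h
    rwa [h1, Nat.mod_eq_of_lt hs] at this

theorem divisibility_by_xn_sub_eta (m n : ℕ) (a : ℕ → ℂ) (η ρ : ℂ)
    (hη : η ≠ 0) (hρ : ρ ^ n = η) (hn : 1 ≤ n) (hnm : n ≤ m) :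
    (X ^ n - C η : Polynomial ℂ) ∣ ∑ j ∈ Finset.range (m + 1), C (a j) * X ^ (m - j) ↔
      ∀ r < n, ∑ j ∈ (Finset.range (m + 1)).filter (fun j => j % n = r),
        a j * ρ⁻¹ ^ j = 0 := by
  have hn0 : n ≠ 0 := by omega
  have hρ0 : ρ ≠ 0 := by
    intro h; exact hη (by rw [← hρ, h, zero_pow hn0])
  set P : Polynomial ℂ := ∑ j ∈ Finset.range (m + 1), C (a j) * X ^ (m - j) with hP
  set R : Polynomial ℂ := ∑ j ∈ Finset.range (m + 1),
      C (a j * η ^ ((m - j) / n)) * X ^ ((m - j) % n) with hR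
  -- the term identity
  have hterm : ∀ j ≤ m, a j * η ^ ((m - j) / n)
      = ρ ^ (m - (m - j) % n) * (a j * ρ⁻¹ ^ j) := by
    intro j hj
    have hdm := Nat.div_add_mod (m - j) n
    have hs : (m - j) % n ≤ m - j := Nat.mod_le _ _
    have h1 : η ^ ((m - j) / n) = ρ ^ (m - j - (m - j) % n) := by
      rw [← hρ, ← pow_mul]; congr 1; omega
    have h2 : ρ ^ (m - (m - j) % n) = ρ ^ (m - j - (m - j) % n) * ρ ^ j := by
      rw [← pow_add]; congr 1; omega
    rw [h1, h2]
    field_simp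
    ring_nf
    rw [mul_assoc, ← mul_pow, mul_inv_cancel₀ hρ0, one_pow, mul_one]
  -- divisibility of the difference
  have hdvd : (X ^ n - C η : Polynomial ℂ) ∣ P - R := by
    rw [hP, hR, ← Finset.sum_sub_distrib]
    apply Finset.dvd_sum
    intro j _
    have hdm := Nat.div_add_mod (m - j) n
    have hx : (X : Polynomial ℂ) ^ (m - j)
        = (X ^ n) ^ ((m - j) / n) * X ^ ((m - j) % n) := by
      rw [← pow_mul, ← pow_add]; congr 1; omega
    have : C (a j) * X ^ (m - j) - C (a j * η ^ ((m - j) / n)) * X ^ ((m - j) % n)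
        = C (a j) * X ^ ((m - j) % n)
          * ((X ^ n) ^ ((m - j) / n) - (C η) ^ ((m - j) / n)) := by
      rw [hx, C_mul, ← C_pow]; ring
    rw [this]
    exact (sub_dvd_pow_sub_pow _ _ _).mul_left _
  -- dvd P ↔ dvd R
  have hiff1 : (X ^ n - C η : Polynomial ℂ) ∣ P ↔ (X ^ n - C η : Polynomial ℂ) ∣ R := by
    constructor <;> intro h
    · have h2 := h.sub hdvd
      simpa using h2
    · have h2 := hdvd.add h
      simpa using h2
  -- degree bound
  have hdegR : R.degree < ((X ^ n - C η : Polynomial ℂ)).degree := by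
    rw [degree_X_pow_sub_C (by omega) η, hR]
    apply lt_of_le_of_lt (degree_sum_le _ _)
    rw [Finset.sup_lt_iff (by exact_mod_cast WithBot.bot_lt_coe n)]
    intro j _
    apply lt_of_le_of_lt (degree_C_mul_X_pow_le _ _)
    exact_mod_cast Nat.cast_lt.mpr (Nat.mod_lt _ (by omega))
  have hiff2 : (X ^ n - C η : Polynomial ℂ) ∣ R ↔ R = 0 := by
    constructor
    · intro h
      exact Polynomial.eq_zero_of_dvd_of_degree_lt h hdegR
    · intro h; rw [h]; exact dvd_zero _
  -- coefficients of R
  have hcoeff : ∀ s : ℕ, R.coeff s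
      = ∑ j ∈ (Finset.range (m + 1)).filter (fun j => (m - j) % n = s),
          a j * η ^ ((m - j) / n) := by
    intro s
    rw [hR, Polynomial.finset_sum_coeff, Finset.sum_filter]
    apply Finset.sum_congr rfl
    intro j _
    rw [Polynomial.coeff_C_mul, Polynomial.coeff_X_pow]
    by_cases h : (m - j) % n = s
    · simp [h]
    · simp [Ne.symm h, h]
  -- fiber sum identity
  have hc : ∀ s < n,
      (∑ j ∈ (Finset.range (m + 1)).filter (fun j => (m - j) % n = s),
        a j * η ^ ((m - j) / n))
      = ρ ^ (m - s) * ∑ j ∈ (Finset.range (m + 1)).filter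
          (fun j => j % n = (m - s) % n), a j * ρ⁻¹ ^ j := by
    intro s hs
    rw [Finset.mul_sum]
    apply Finset.sum_congr
    · apply Finset.filter_congr
      intro j hj
      simp only [Finset.mem_range] at hj
      exact key_iff' (by omega) hs (by omega)
    · intro j hj
      simp only [Finset.mem_filter, Finset.mem_range] at hj
      have hjs : (m - j) % n = s := (key_iff' (by omega) hs (by omega)).mpr hj.2
      rw [hterm j (by omega), hjs]
  rw [hiff1, hiff2]
  constructor
  · intro hR0 r hr
    set s := (m - r) % n with hsdef
    have hs : s < n := Nat.mod_lt _ (by omega)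
    have hms : (m - s) % n = r := by
      have h1 : s % n = (m - r) % n := by rw [Nat.mod_eq_of_lt hs]
      have h2 := (mod_sub_iff' (show s ≤ m by omega) (Nat.sub_le m r)).mpr h1
      rwa [Nat.sub_sub_self (show r ≤ m by omega), Nat.mod_eq_of_lt hr] at h2
    have hc0 : R.coeff s = 0 := by rw [hR0, Polynomial.coeff_zero]
    rw [hcoeff, hc s hs, hms] at hc0
    rcases mul_eq_zero.mp hc0 with h | h
    · exact absurd h (pow_ne_zero _ hρ0)
    · exact h
  · intro hall
    apply Polynomial.ext
    intro s
    rw [Polynomial.coeff_zero, hcoeff]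
    by_cases hs : s < n
    · rw [hc s hs, hall ((m - s) % n) (Nat.mod_lt _ (by omega)), mul_zero]
    · rw [Finset.filter_false_of_mem, Finset.sum_empty]
      intro j _
      have := Nat.mod_lt (m - j) (show 0 < n by omega)
      omega
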